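/- Let A be a field. If σ ∈ A^ω is rational, i.e., σ = ρ × τ⁻¹ for polynomial streams ρ, τ (streams with finitely many nonzero entries) with τ(0) ≠ 0, then there exists d ∈ ℕ and coefficients a_0,...,a_{d−1} ∈ A such that the d-th tail of σ is a linear combination of the lower-order tails: σ^(d) = Σ_{i=0}^{d−1} a_i · σ^(i). -/

import Mathlib

theorem rational_stream_tail_linear_combination {A : Type*} [Field A]
    (σ ρ τ : PowerSeries A)
    (hρ : ∃ N : ℕ, ∀ m ≥ N, PowerSeries.coeff m ρ = 0)
    (hτ : ∃ N : ℕ, ∀ m ≥ N, PowerSeries.coeff m τ = 0)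
    (hτ0 : PowerSeries.constantCoeff τ ≠ 0)
    (hσ : σ = ρ * τ⁻¹) :
    ∃ (d : ℕ) (a : Fin d → A), ∀ n : ℕ,
      PowerSeries.coeff (n + d) σ =
        ∑ i : Fin d, a i * PowerSeries.coeff (n + (i : ℕ)) σ := by
  obtain ⟨Nρ, hNρ⟩ := hρ
  obtain ⟨Nτ, hNτ⟩ := hτ
  set d := max Nρ Nτ with hd
  have hdρ : Nρ ≤ d := le_max_left _ _
  have hdτ : Nτ ≤ d := le_max_right _ _
  have hτ00 : PowerSeries.coeff 0 τ = PowerSeries.constantCoeff τ :=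
    PowerSeries.coeff_zero_eq_constantCoeff_apply τ
  have htσ : τ * σ = ρ := by
    rw [hσ, mul_comm ρ, ← mul_assoc, PowerSeries.mul_inv_cancel τ hτ0, one_mul]
  refine ⟨d, fun i => -(PowerSeries.coeff (d - (i : ℕ)) τ) / PowerSeries.constantCoeff τ,
    fun n => ?_⟩
  have key : ∑ k ∈ Finset.range (n + d + 1),
      PowerSeries.coeff k τ * PowerSeries.coeff (n + d - k) σ = 0 := by
    have h1 : PowerSeries.coeff (n + d) (τ * σ) = 0 := by
      rw [htσ]
      exact hNρ _ (le_trans hdρ (Nat.le_add_left _ _))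
    rw [PowerSeries.coeff_mul, Finset.Nat.sum_antidiagonal_eq_sum_range_succ
      (f := fun a b => PowerSeries.coeff a τ * PowerSeries.coeff b σ)] at h1
    exact h1
  -- truncate the sum: terms with k ≥ d + 1 vanish
  have key2 : ∑ k ∈ Finset.range (d + 1),
      PowerSeries.coeff k τ * PowerSeries.coeff (n + d - k) σ = 0 := by
    rw [← key]
    apply Finset.sum_subset
    · exact Finset.range_subset_range.2 (by omega)
    · intro k hk hk2
      simp only [Finset.mem_range, not_lt] at hk hk2
      rw [hNτ k (le_trans hdτ (Nat.le_of_succ_le hk2)), zero_mul]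
  rw [Finset.sum_range_succ'] at key2
  have key3 : ∑ k ∈ Finset.range d,
      PowerSeries.coeff (k + 1) τ * PowerSeries.coeff (n + d - (k + 1)) σ
      = - (PowerSeries.constantCoeff τ * PowerSeries.coeff (n + d) σ) := by
    rw [← hτ00]
    simp only [Nat.sub_zero] at key2
    linear_combination key2
  -- reflect the sum
  have key4 : ∑ k ∈ Finset.range d,
      PowerSeries.coeff (d - k) τ * PowerSeries.coeff (n + k) σ
      = - (PowerSeries.constantCoeff τ * PowerSeries.coeff (n + d) σ) := by
    rw [← key3, ← Finset.sum_range_reflect]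
    apply Finset.sum_congr rfl
    intro k hk
    simp only [Finset.mem_range] at hk
    have hk1 : d - (d - 1 - k) = k + 1 := by omega
    have hk2 : n + (d - 1 - k) = n + d - (k + 1) := by omega
    rw [hk1, hk2]
  rw [← Fin.sum_univ_eq_sum_range
    (fun k => PowerSeries.coeff (d - k) τ * PowerSeries.coeff (n + k) σ)] at key4
  have hsum : ∑ i : Fin d, -(PowerSeries.coeff (d - (i : ℕ)) τ) /
        PowerSeries.constantCoeff τ * PowerSeries.coeff (n + (i : ℕ)) σ
      = -(1 / PowerSeries.constantCoeff τ) *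
        ∑ i : Fin d, PowerSeries.coeff (d - (i : ℕ)) τ *
          PowerSeries.coeff (n + (i : ℕ)) σ := by
    rw [Finset.mul_sum]
    exact Finset.sum_congr rfl fun i _ => by ring
  rw [hsum, key4]
  field_simp
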